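/- For n ≥ 0, Chow–Gessel's type B q-Eulerian polynomial satisfies B_{2n+1}(-q^{-2n-1}, q) = 0, and B_{2n}(-q^{-2n-1}, q) = (-1)^n q^{-n(2n+1)} b_{2n,n}(q), where b_{n,k}(q) are defined by the recurrence b_{n,k}(q) = [2k+1]_q b_{n-1,k}(q) + (1+q)(1+q^{2k-1}) q^{2k-1} [n+1-2k]_{q^2} b_{n-1,k-1}(q) with b_{1,0}(q)=1. -/

import Mathlib

/-- The `q`-integer `[m]_q = 1 + q + ⋯ + q^{m-1}` as a polynomial in `q`. -/
noncomputable def qint (m : ℕ) : Polynomial ℤ := ∑ i ∈ Finset.range m, Polynomial.X ^ i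

/-- The `q²`-integer `[m]_{q²} = 1 + q² + ⋯ + q^{2(m-1)}` as a polynomial in `q`. -/
noncomputable def qint2 (m : ℕ) : Polynomial ℤ := ∑ i ∈ Finset.range m, Polynomial.X ^ (2 * i)

/-- The natural inclusion of `ℤ[q]` into the field `ℚ(q)` of rational functions. -/
noncomputable def toRat : Polynomial ℤ →+* RatFunc ℚ :=
  (algebraMap (Polynomial ℚ) (RatFunc ℚ)).comp (Polynomial.mapRingHom (Int.castRingHom ℚ))

open Polynomial PowerSeries Finset

section Aux

lemma one_sub_mul_qint (m : ℕ) : (1 - Polynomial.X) * qint m = 1 - Polynomial.X ^ m := by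
  have := geom_sum_mul (Polynomial.X : Polynomial ℤ) m
  unfold qint
  linear_combination -this

lemma one_sub_sq_mul_qint2 (m : ℕ) :
    (1 - Polynomial.X ^ 2) * qint2 m = 1 - Polynomial.X ^ (2 * m) := by
  have := geom_sum_mul ((Polynomial.X : Polynomial ℤ) ^ 2) m
  unfold qint2
  have h2 : ∀ i, (Polynomial.X : Polynomial ℤ) ^ (2 * i) = (Polynomial.X ^ 2) ^ i := by
    intro i; rw [pow_mul]
  simp_rw [h2]
  linear_combination -this

lemma coeff_comp_C_mul_X {R : Type*} [CommRing R] (p : R[X]) (a : R) (k : ℕ) :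
    (p.comp (Polynomial.C a * Polynomial.X)).coeff k = a ^ k * p.coeff k := by
  induction p using Polynomial.induction_on' with
  | add f g hf hg => simp [add_comp, hf, hg, mul_add]
  | monomial n c =>
    rw [monomial_comp, mul_pow, ← Polynomial.C_pow]
    have : Polynomial.C c * (Polynomial.C (a ^ n) * Polynomial.X ^ n)
        = Polynomial.C (c * a ^ n) * Polynomial.X ^ n := by
      rw [Polynomial.C_mul]; ring
    rw [this, Polynomial.coeff_C_mul, Polynomial.coeff_monomial]
    by_cases h : n = k
    · subst h; simp [Polynomial.coeff_X_pow, mul_comm, mul_left_comm]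
    · simp [Polynomial.coeff_X_pow, Ne.symm h, h]

lemma coe_comp_C_mul_X {R : Type*} [CommRing R] (p : R[X]) (a : R) :
    ((p.comp (Polynomial.C a * Polynomial.X) : R[X]) : PowerSeries R)
      = PowerSeries.rescale a (p : PowerSeries R) := by
  ext k
  rw [Polynomial.coeff_coe, PowerSeries.coeff_rescale, Polynomial.coeff_coe,
    coeff_comp_C_mul_X]

lemma rescale_one_sub_C_mul_X {R : Type*} [CommRing R] (a c : R) :
    PowerSeries.rescale a (1 - PowerSeries.C (R := R) c * PowerSeries.X)
      = 1 - PowerSeries.C (R := R) (c * a) * PowerSeries.X := by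
  ext k
  simp only [PowerSeries.coeff_rescale, map_sub, PowerSeries.coeff_one]
  cases k with
  | zero => simp
  | succ k =>
    cases k with
    | zero => simp [PowerSeries.coeff_C_mul, PowerSeries.coeff_X, mul_comm]
    | succ k => simp [PowerSeries.coeff_C_mul, PowerSeries.coeff_X]

end Aux
section Brec

lemma Brec (B : ℕ → Polynomial (Polynomial ℤ))
    (hB : ∀ n, ((B n : PowerSeries (Polynomial ℤ)) =
      PowerSeries.mk (fun j => (qint (2 * j + 1)) ^ n) *
        ∏ i ∈ Finset.range (n + 1),
          (1 - PowerSeries.C (R := Polynomial ℤ) (Polynomial.X ^ (2 * i)) * PowerSeries.X)))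
    (n : ℕ) :
    Polynomial.C (1 - Polynomial.X) * B (n + 1)
      = (1 - Polynomial.C (Polynomial.X ^ (2 * (n + 1))) * Polynomial.X) * B n
        - Polynomial.C Polynomial.X * ((1 - Polynomial.X) *
            ((B n).comp (Polynomial.C (Polynomial.X ^ 2) * Polynomial.X))) := by
  rw [← Polynomial.coe_inj]
  push_cast [Polynomial.coe_mul, Polynomial.coe_sub, Polynomial.coe_one, Polynomial.coe_C,
    Polynomial.coe_X, Polynomial.coe_pow]
  rw [coe_comp_C_mul_X, hB n, hB (n+1)]
  have ha : PowerSeries.rescale ((Polynomial.X : Polynomial ℤ)^2)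
        (PowerSeries.mk (fun j => (qint (2*j+1))^n) *
          ∏ i ∈ Finset.range (n+1),
            (1 - PowerSeries.C (R := Polynomial ℤ) (Polynomial.X ^ (2*i)) * PowerSeries.X))
      = PowerSeries.mk (fun j => ((Polynomial.X : Polynomial ℤ)^2)^j * (qint (2*j+1))^n) *
          ∏ i ∈ Finset.range (n+1),
            (1 - PowerSeries.C (R := Polynomial ℤ) (Polynomial.X ^ (2*i+2)) * PowerSeries.X) := by
    rw [map_mul, PowerSeries.rescale_mk, map_prod]
    congr 1
    refine Finset.prod_congr rfl (fun i _ => ?_)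
    rw [rescale_one_sub_C_mul_X, ← pow_add]
  have hb : (1 - PowerSeries.X) *
      ∏ i ∈ Finset.range (n+1),
        (1 - PowerSeries.C (R := Polynomial ℤ) ((Polynomial.X : Polynomial ℤ) ^ (2*i+2)) * PowerSeries.X)
      = ∏ i ∈ Finset.range (n+2),
          (1 - PowerSeries.C (R := Polynomial ℤ) ((Polynomial.X : Polynomial ℤ) ^ (2*i)) * PowerSeries.X) := by
    have hshift : (∏ i ∈ Finset.range (n+1),
        (1 - PowerSeries.C (R := Polynomial ℤ) ((Polynomial.X : Polynomial ℤ) ^ (2*(i+1))) * PowerSeries.X))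
        = ∏ i ∈ Finset.range (n+1),
          (1 - PowerSeries.C (R := Polynomial ℤ) ((Polynomial.X : Polynomial ℤ) ^ (2*i+2)) * PowerSeries.X) :=
      Finset.prod_congr rfl fun i _ => by rw [show 2*(i+1) = 2*i+2 from by ring]
    rw [Finset.prod_range_succ'
      (fun i => (1 - PowerSeries.C (R := Polynomial ℤ) ((Polynomial.X : Polynomial ℤ) ^ (2*i)) * PowerSeries.X)) (n+1)]
    simp only [mul_zero, pow_zero, map_one, one_mul]
    rw [hshift, mul_comm]
  have hc : (1 - PowerSeries.C (R := Polynomial ℤ) ((Polynomial.X : Polynomial ℤ) ^ (2*(n+1))) * PowerSeries.X) *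
      ∏ i ∈ Finset.range (n+1),
        (1 - PowerSeries.C (R := Polynomial ℤ) ((Polynomial.X : Polynomial ℤ) ^ (2*i)) * PowerSeries.X)
      = ∏ i ∈ Finset.range (n+2),
          (1 - PowerSeries.C (R := Polynomial ℤ) ((Polynomial.X : Polynomial ℤ) ^ (2*i)) * PowerSeries.X) := by
    conv_rhs => rw [Finset.prod_range_succ]
    rw [mul_comm]
  have hd : PowerSeries.C (R := Polynomial ℤ) (1 - Polynomial.X) *
        PowerSeries.mk (fun j => (qint (2*j+1))^(n+1))
      = PowerSeries.mk (fun j => (qint (2*j+1))^n)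
        - PowerSeries.C (R := Polynomial ℤ) Polynomial.X *
            PowerSeries.mk (fun j => ((Polynomial.X : Polynomial ℤ)^2)^j * (qint (2*j+1))^n) := by
    refine PowerSeries.ext fun k => ?_
    rw [PowerSeries.coeff_C_mul, map_sub, PowerSeries.coeff_C_mul]
    simp only [PowerSeries.coeff_mk]
    have h1 : (1 - (Polynomial.X : Polynomial ℤ)) * qint (2*k+1) = 1 - Polynomial.X ^ (2*k+1) :=
      one_sub_mul_qint (2*k+1)
    have h2 : (Polynomial.X : Polynomial ℤ) * ((Polynomial.X^2)^k) = Polynomial.X ^ (2*k+1) := by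
      rw [← pow_mul, ← pow_succ']
    calc (1 - (Polynomial.X : Polynomial ℤ)) * qint (2*k+1) ^ (n+1)
        = ((1 - Polynomial.X) * qint (2*k+1)) * qint (2*k+1) ^ n := by ring
      _ = (1 - Polynomial.X^(2*k+1)) * qint (2*k+1) ^ n := by rw [h1]
      _ = qint (2*k+1) ^ n - Polynomial.X * ((Polynomial.X^2)^k * qint (2*k+1) ^ n) := by
          rw [← h2]; ring
  rw [ha]
  calc PowerSeries.C (R := Polynomial ℤ) (1 - Polynomial.X) *
        (PowerSeries.mk (fun j => (qint (2*j+1))^(n+1)) *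
          ∏ i ∈ Finset.range (n+1+1),
            (1 - PowerSeries.C (R := Polynomial ℤ) (Polynomial.X ^ (2*i)) * PowerSeries.X))
      = (PowerSeries.C (R := Polynomial ℤ) (1 - Polynomial.X) *
          PowerSeries.mk (fun j => (qint (2*j+1))^(n+1))) *
          ∏ i ∈ Finset.range (n+2),
            (1 - PowerSeries.C (R := Polynomial ℤ) (Polynomial.X ^ (2*i)) * PowerSeries.X) := by
        simp only [show n+1+1 = n+2 from rfl]
        ring
    _ = (PowerSeries.mk (fun j => (qint (2*j+1))^n)
        - PowerSeries.C (R := Polynomial ℤ) Polynomial.X *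
            PowerSeries.mk (fun j => ((Polynomial.X : Polynomial ℤ)^2)^j * (qint (2*j+1))^n)) *
          ∏ i ∈ Finset.range (n+2),
            (1 - PowerSeries.C (R := Polynomial ℤ) (Polynomial.X ^ (2*i)) * PowerSeries.X) := by
        rw [hd]
    _ = PowerSeries.mk (fun j => (qint (2*j+1))^n) *
          ((1 - PowerSeries.C (R := Polynomial ℤ) ((Polynomial.X : Polynomial ℤ) ^ (2*(n+1))) * PowerSeries.X) *
            ∏ i ∈ Finset.range (n+1),
              (1 - PowerSeries.C (R := Polynomial ℤ) ((Polynomial.X : Polynomial ℤ) ^ (2*i)) * PowerSeries.X))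
        - PowerSeries.C (R := Polynomial ℤ) Polynomial.X *
            PowerSeries.mk (fun j => ((Polynomial.X : Polynomial ℤ)^2)^j * (qint (2*j+1))^n) *
            ((1 - PowerSeries.X) *
              ∏ i ∈ Finset.range (n+1),
                (1 - PowerSeries.C (R := Polynomial ℤ) ((Polynomial.X : Polynomial ℤ) ^ (2*i+2)) * PowerSeries.X)) := by
        rw [hb, hc]; ring
    _ = _ := by ring

end Brec

section RatSide

/-- the product `∏_{j<s} (1 - q^e q^{2(a+j)+1})` in `ℚ(q)`. -/
noncomputable def PiP (a s : ℕ) (e : ℤ) : RatFunc ℚ :=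
  ∏ j ∈ Finset.range s, (1 - RatFunc.X ^ e * RatFunc.X ^ (2 * (a + j) + 1))

/-- coefficient `c_k(n, e) = (-1)^k q^{ek} ∏_{i=k}^{n-1-k}(1-q^{e+2i+1})`. -/
noncomputable def cc (n k : ℕ) (e : ℤ) : RatFunc ℚ :=
  (-1) ^ k * RatFunc.X ^ (e * k) * PiP k (n - 2 * k) e

lemma toRat_X : toRat Polynomial.X = RatFunc.X := by
  simp [toRat, RatFunc.algebraMap_X]

lemma toRat_qint (m : ℕ) : (1 - RatFunc.X) * toRat (qint m) = 1 - RatFunc.X ^ m := by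
  have := congrArg toRat (one_sub_mul_qint m)
  simpa [map_mul, map_sub, map_one, map_pow, toRat_X] using this

lemma toRat_qint2 (m : ℕ) :
    (1 - RatFunc.X ^ 2) * toRat (qint2 m) = 1 - RatFunc.X ^ (2 * m) := by
  have := congrArg toRat (one_sub_sq_mul_qint2 m)
  simpa [map_mul, map_sub, map_one, map_pow, toRat_X] using this

lemma PiP_top (a s : ℕ) (e : ℤ) :
    PiP a (s + 1) e = PiP a s e * (1 - RatFunc.X ^ e * RatFunc.X ^ (2 * (a + s) + 1)) := by
  rw [PiP, Finset.prod_range_succ]; rfl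

lemma PiP_bot (a s : ℕ) (e : ℤ) :
    PiP a (s + 1) e = (1 - RatFunc.X ^ e * RatFunc.X ^ (2 * a + 1)) * PiP (a + 1) s e := by
  rw [PiP, Finset.prod_range_succ', mul_comm]
  refine congrArg₂ (· * ·) (by norm_num)
    (Finset.prod_congr rfl fun j _ => by rw [show 2*(a+(j+1))+1 = 2*((a+1)+j)+1 by omega])

lemma PiP_shift (a s : ℕ) (e : ℤ) : PiP a s (e + 2) = PiP (a + 1) s e := by
  unfold PiP
  refine Finset.prod_congr rfl fun j _ => ?_
  rw [zpow_add₀ RatFunc.X_ne_zero, show ((2:ℤ)) = ((2:ℕ) : ℤ) by norm_num, zpow_natCast,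
    mul_assoc, ← pow_add, show 2 + (2*(a+j)+1) = 2*((a+1)+j)+1 by omega]

lemma key_ring (x y p w A Q T s : RatFunc ℚ)
    (hQ : (1 - x) * Q = 1 - p) (hT : (1 - x) * ((1 + x) * T) = 1 - w) :
    (1 - x) * ((s * ((1 - y*p) * ((1 - y*p*w) * A))) * Q
        + (-(s*y) * A) * ((1 + x) * (1 + p) * p * T))
      = (1 + p*p*w*y) * (s * ((1 - y*p) * A)) - (1 + y) * (s * p * ((1 - y*p*w) * A)) := by
  linear_combination (s * (1 - y*p) * (1 - y*p*w) * A) * hQ - (s*y*A*(1+p)*p) * hT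

lemma PiP_zero (a : ℕ) (e : ℤ) : PiP a 0 e = 1 := by simp [PiP]

lemma zpow_split (e : ℤ) (v : ℕ) :
    (RatFunc.X : RatFunc ℚ) ^ (e + (v : ℤ)) = RatFunc.X ^ e * RatFunc.X ^ v := by
  rw [zpow_add₀ RatFunc.X_ne_zero, zpow_natCast]

lemma perk (N k : ℕ) (e : ℤ) (h : 2 * k + 1 ≤ N) :
    (1 - RatFunc.X) * (cc N k e * toRat (qint (2 * k + 1))
      + cc N (k + 1) e * toRat ((1 + Polynomial.X) * (1 + Polynomial.X ^ (2 * k + 1)) *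
          Polynomial.X ^ (2 * k + 1) * qint2 (N - 1 - 2 * k)))
    = (1 + RatFunc.X ^ (2 * (N : ℤ) + e)) * cc (N - 1) k e
      - RatFunc.X * ((1 + RatFunc.X ^ e) * cc (N - 1) k (e + 2)) := by
  obtain ⟨m, rfl⟩ : ∃ m, N = 2 * k + 1 + m := ⟨N - (2 * k + 1), by omega⟩
  have hQ := toRat_qint (2 * k + 1)
  have hsub : 2 * k + 1 + m - 1 - 2 * k = m := by omega
  rw [hsub]
  have hT : (1 - RatFunc.X) * ((1 + RatFunc.X) * toRat (qint2 m))
      = 1 - RatFunc.X ^ (2 * m) := by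
    rw [← toRat_qint2 m]; ring
  have hF : toRat ((1 + Polynomial.X) * (1 + Polynomial.X ^ (2 * k + 1)) *
        Polynomial.X ^ (2 * k + 1) * qint2 m)
      = (1 + RatFunc.X) * (1 + RatFunc.X ^ (2 * k + 1)) * RatFunc.X ^ (2 * k + 1) *
          toRat (qint2 m) := by
    simp [map_mul, map_add, map_one, map_pow, toRat_X]
  have hXN : (RatFunc.X : RatFunc ℚ) ^ (2 * ((2 * k + 1 + m : ℕ) : ℤ) + e)
      = RatFunc.X ^ (2 * k + 1) * (RatFunc.X ^ (2 * k + 1) * RatFunc.X ^ (2 * m))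
          * RatFunc.X ^ e := by
    rw [show 2 * ((2 * k + 1 + m : ℕ) : ℤ) + e = e + ((2 * (2 * k + 1 + m) : ℕ) : ℤ) by
      push_cast; ring, zpow_split]
    rw [show 2 * (2 * k + 1 + m) = (2 * k + 1) + ((2 * k + 1) + 2 * m) by omega,
      pow_add, pow_add]
    ring
  have hEk1 : (RatFunc.X : RatFunc ℚ) ^ (e * ((k : ℤ) + 1))
      = RatFunc.X ^ (e * k) * RatFunc.X ^ e := by
    rw [show e * ((k : ℤ) + 1) = e * k + e by ring, zpow_add₀ RatFunc.X_ne_zero]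
  have hEk2 : (RatFunc.X : RatFunc ℚ) ^ ((e + 2) * (k : ℤ))
      = RatFunc.X ^ (e * k) * RatFunc.X ^ (2 * k) := by
    rw [show (e + 2) * (k : ℤ) = e * k + ((2 * k : ℕ) : ℤ) by push_cast; ring, zpow_split]
  cases m with
  | zero =>
    have hq20 : qint2 0 = 0 := by simp [qint2]
    rw [hq20, mul_zero, map_zero, mul_zero, add_zero]
    simp only [cc, Nat.add_zero]
    rw [show 2 * k + 1 - 2 * k = 0 + 1 by omega, show 2 * k + 1 - 1 = 2 * k from rfl,
      show 2 * k - 2 * k = 0 by omega, PiP_top]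
    simp only [PiP_zero, one_mul, mul_one]
    rw [show 2 * (k + 0) + 1 = 2 * k + 1 by omega]
    rw [Nat.add_zero] at hXN
    rw [hXN]
    rw [hEk2]
    linear_combination ((-1 : RatFunc ℚ)^k * RatFunc.X ^ (e*k) *
      (1 - RatFunc.X ^ e * RatFunc.X ^ (2*k+1))) * hQ
  | succ s =>
    -- abbreviations
    set x : RatFunc ℚ := RatFunc.X with hx
    have E1 : cc (2 * k + 1 + (s + 1)) k e
        = (-1) ^ k * x ^ (e * k) * ((1 - x ^ e * x ^ (2 * k + 1)) *
            ((1 - x ^ e * (x ^ (2 * k + 1) * x ^ (2 * (s + 1)))) * PiP (k + 1) s e)) := by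
      rw [cc, show 2 * k + 1 + (s + 1) - 2 * k = (s + 1) + 1 by omega, PiP_bot, PiP_top]
      rw [show 2 * ((k + 1) + s) + 1 = (2 * k + 1) + 2 * (s + 1) by omega, pow_add]
      ring
    have E2 : cc (2 * k + 1 + (s + 1)) (k + 1) e
        = (-1) ^ (k + 1) * (x ^ (e * k) * x ^ e) * PiP (k + 1) s e := by
      rw [cc, show 2 * k + 1 + (s + 1) - 2 * (k + 1) = s by omega]
      push_cast
      rw [hEk1]
    have E3 : cc (2 * k + 1 + (s + 1) - 1) k e
        = (-1) ^ k * x ^ (e * k) * ((1 - x ^ e * x ^ (2 * k + 1)) * PiP (k + 1) s e) := by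
      rw [cc, show 2 * k + 1 + (s + 1) - 1 - 2 * k = s + 1 by omega, PiP_bot]
    have E4 : cc (2 * k + 1 + (s + 1) - 1) k (e + 2)
        = (-1) ^ k * (x ^ (e * k) * x ^ (2 * k)) *
            ((1 - x ^ e * (x ^ (2 * k + 1) * x ^ (2 * (s + 1)))) * PiP (k + 1) s e) := by
      rw [cc, show 2 * k + 1 + (s + 1) - 1 - 2 * k = s + 1 by omega, PiP_shift, PiP_top]
      rw [show 2 * ((k + 1) + s) + 1 = (2 * k + 1) + 2 * (s + 1) by omega, pow_add]
      rw [hEk2]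
      ring
    rw [E1, E2, E3, E4, hF, hXN]
    rw [show 2 * (s + 1) = 2 * (s + 1) from rfl]
    linear_combination ((-1 : RatFunc ℚ)^k * x ^ (e*k) *
        (1 - x ^ e * x ^ (2*k+1)) * (1 - x ^ e * (x ^ (2*k+1) * x ^ (2*(s+1)))) *
        PiP (k+1) s e) * hQ
      - ((-1 : RatFunc ℚ)^k * x ^ (e*k) * x ^ e * PiP (k+1) s e *
          (1 + x ^ (2*k+1)) * x ^ (2*k+1)) * hT

lemma eval_rec (B : ℕ → Polynomial (Polynomial ℤ))
    (hB : ∀ n, ((B n : PowerSeries (Polynomial ℤ)) =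
      PowerSeries.mk (fun j => (qint (2 * j + 1)) ^ n) *
        ∏ i ∈ Finset.range (n + 1),
          (1 - PowerSeries.C (R := Polynomial ℤ) (Polynomial.X ^ (2 * i)) * PowerSeries.X)))
    (n : ℕ) (e : ℤ) :
    (1 - RatFunc.X) * Polynomial.eval₂ toRat (-(RatFunc.X ^ e)) (B (n + 1))
      = (1 + RatFunc.X ^ (2 * ((n + 1 : ℕ) : ℤ) + e)) *
          Polynomial.eval₂ toRat (-(RatFunc.X ^ e)) (B n)
        - RatFunc.X * ((1 + RatFunc.X ^ e) *
            Polynomial.eval₂ toRat (-(RatFunc.X ^ (e + 2))) (B n)) := by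
  have h := congrArg (Polynomial.eval₂ toRat (-(RatFunc.X ^ e))) (Brec B hB n)
  simp only [Polynomial.eval₂_mul, Polynomial.eval₂_sub, Polynomial.eval₂_one,
    Polynomial.eval₂_C, Polynomial.eval₂_X, Polynomial.eval₂_comp] at h
  have h1 : toRat (1 - Polynomial.X) = 1 - RatFunc.X := by
    rw [map_sub, map_one, toRat_X]
  have h2 : toRat (Polynomial.X ^ (2 * (n + 1))) * -(RatFunc.X ^ e)
      = -(RatFunc.X ^ (2 * ((n + 1 : ℕ) : ℤ) + e)) := by
    rw [map_pow, toRat_X,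
      show 2 * ((n + 1 : ℕ) : ℤ) + e = e + ((2 * (n + 1) : ℕ) : ℤ) by push_cast; ring,
      zpow_split]
    ring
  have h3 : toRat (Polynomial.X ^ 2) * -(RatFunc.X ^ e) = -(RatFunc.X ^ (e + 2)) := by
    rw [map_pow, toRat_X, show e + 2 = e + ((2 : ℕ) : ℤ) by norm_num, zpow_split]
    ring
  rw [h1, h2, h3, toRat_X] at h
  rw [h]
  ring

end RatSide

lemma PiP_eq_zero (a s : ℕ) (e : ℤ) (j : ℕ) (hj : j < s)
    (h : e + ((2 * (a + j) + 1 : ℕ) : ℤ) = 0) : PiP a s e = 0 := by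
  refine Finset.prod_eq_zero (Finset.mem_range.2 hj) ?_
  rw [← zpow_split, h]
  simp

/-- For `n ≥ 0`, Chow–Gessel's type B q-Eulerian polynomials (defined by
`∑_{j≥0} [2j+1]_q^n t^j = B_n(t,q)/(t;q²)_{n+1}`) satisfy
`B_{2n+1}(-q^{-2n-1}, q) = 0` and
`B_{2n}(-q^{-2n-1}, q) = (-1)^n q^{-n(2n+1)} b_{2n,n}(q)`, where `b_{n,k}(q)` satisfy
`b_{n,k} = [2k+1]_q b_{n-1,k} + (1+q)(1+q^{2k-1}) q^{2k-1} [n+1-2k]_{q²} b_{n-1,k-1}`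
with `b_{1,0}(q) = 1` (and `b_{0,0}(q) = 1`, `b_{n,k}(q) = 0` for `k > ⌊n/2⌋`). -/
theorem chowGessel_qEulerianB_special_values
    (B : ℕ → Polynomial (Polynomial ℤ))
    (hB : ∀ n, ((B n : PowerSeries (Polynomial ℤ)) =
      PowerSeries.mk (fun j => (qint (2 * j + 1)) ^ n) *
        ∏ i ∈ Finset.range (n + 1),
          (1 - PowerSeries.C (R := Polynomial ℤ) (Polynomial.X ^ (2 * i)) * PowerSeries.X)))
    (b : ℕ → ℕ → Polynomial ℤ)
    (hb00 : b 0 0 = 1)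
    (hb10 : b 1 0 = 1)
    (hb0 : ∀ n k, n / 2 < k → b n k = 0)
    (hbrec0 : ∀ n, 2 ≤ n → b n 0 = b (n - 1) 0)
    (hbrec : ∀ n k, 2 ≤ n → 1 ≤ k → k ≤ n / 2 →
      b n k = qint (2 * k + 1) * b (n - 1) k +
        (1 + Polynomial.X) * (1 + Polynomial.X ^ (2 * k - 1)) * Polynomial.X ^ (2 * k - 1) *
          qint2 (n + 1 - 2 * k) * b (n - 1) (k - 1)) :
    ∀ n : ℕ,
      Polynomial.eval₂ toRat (-(RatFunc.X ^ (-(2 * (n : ℤ) + 1)))) (B (2 * n + 1)) = 0 ∧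
      Polynomial.eval₂ toRat (-(RatFunc.X ^ (-(2 * (n : ℤ) + 1)))) (B (2 * n)) =
        (-1 : RatFunc ℚ) ^ n * RatFunc.X ^ (-((n : ℤ) * (2 * n + 1))) * toRat (b (2 * n) n) := by
  classical
  -- B 0 = 1
  have hB0 : B 0 = 1 := by
    rw [← Polynomial.coe_inj, hB 0]
    have h1 : ∏ i ∈ Finset.range (0 + 1),
        (1 - PowerSeries.C (R := Polynomial ℤ) (Polynomial.X ^ (2 * i)) * PowerSeries.X)
        = 1 - PowerSeries.X := by
      rw [Finset.prod_range_one]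
      norm_num
    have h2 : (PowerSeries.mk fun j => qint (2 * j + 1) ^ 0)
        = PowerSeries.mk (fun _ => (1 : Polynomial ℤ)) := by
      simp
    rw [h1, h2]
    have h3 : (PowerSeries.mk (fun _ => (1 : Polynomial ℤ))) * (1 - PowerSeries.X) = 1 := by
      refine PowerSeries.ext fun k => ?_
      rw [mul_sub, mul_one, map_sub]
      cases k with
      | zero => simp
      | succ k => simp [PowerSeries.coeff_succ_mul_X]
    rw [h3, Polynomial.coe_one]
  -- 1 - X ≠ 0 in ℚ(q)
  have h1X : (1 - RatFunc.X : RatFunc ℚ) ≠ 0 := by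
    have heq : (1 - RatFunc.X : RatFunc ℚ)
        = algebraMap (Polynomial ℚ) (RatFunc ℚ) (1 - Polynomial.X) := by
      rw [map_sub, map_one, RatFunc.algebraMap_X]
    rw [heq]
    intro hcon
    have h0 : (1 - Polynomial.X : Polynomial ℚ) = 0 :=
      RatFunc.algebraMap_injective ℚ (hcon.trans (map_zero _).symm)
    have := congrArg (fun p => Polynomial.coeff p 1) h0
    norm_num [Polynomial.coeff_one] at this
  have hq1 : qint 1 = 1 := by simp [qint]
  have hq20 : qint2 0 = 0 := by simp [qint2]
  -- the G-recurrence
  have hGrec : ∀ (n : ℕ) (e : ℤ),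
      (1 - RatFunc.X) * ∑ k ∈ Finset.range (n + 1 + 1), cc (n + 1) k e * toRat (b (n + 1) k)
      = (1 + RatFunc.X ^ (2 * ((n + 1 : ℕ) : ℤ) + e)) *
          ∑ k ∈ Finset.range (n + 1), cc n k e * toRat (b n k)
        - RatFunc.X * ((1 + RatFunc.X ^ e) *
            ∑ k ∈ Finset.range (n + 1), cc n k (e + 2) * toRat (b n k)) := by
    intro n e
    have hsplit : ∀ k : ℕ, b (n + 1) k = qint (2 * k + 1) * b n k
        + (if k = 0 then 0 else
            (1 + Polynomial.X) * (1 + Polynomial.X ^ (2 * k - 1)) * Polynomial.X ^ (2 * k - 1) *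
              qint2 (n + 2 - 2 * k) * b n (k - 1)) := by
      intro k
      rcases Nat.eq_zero_or_pos k with rfl | hk
      · rw [if_pos rfl, add_zero, show 2 * 0 + 1 = 1 from rfl, hq1, one_mul]
        rcases Nat.eq_zero_or_pos n with rfl | hn
        · rw [hb10, hb00]
        · exact hbrec0 (n + 1) (by omega)
      · rw [if_neg (by omega)]
        by_cases hk2 : k ≤ (n + 1) / 2
        · exact hbrec (n + 1) k (by omega) hk hk2
        · rw [hb0 (n + 1) k (by omega), hb0 n k (by omega), show n + 2 - 2 * k = 0 by omega,
            hq20]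
          ring
    -- split the sum according to hsplit
    have haveA : ∑ k ∈ Finset.range (n + 1 + 1), cc (n + 1) k e * toRat (b (n + 1) k)
        = (∑ k ∈ Finset.range (n + 1 + 1),
            cc (n + 1) k e * toRat (qint (2 * k + 1)) * toRat (b n k))
          + ∑ k ∈ Finset.range (n + 1 + 1), (if k = 0 then 0 else
              cc (n + 1) k e * toRat ((1 + Polynomial.X) * (1 + Polynomial.X ^ (2 * k - 1)) *
                Polynomial.X ^ (2 * k - 1) * qint2 (n + 2 - 2 * k)) * toRat (b n (k - 1))) := by
      rw [← Finset.sum_add_distrib]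
      refine Finset.sum_congr rfl fun k _ => ?_
      rw [hsplit k]
      rcases Nat.eq_zero_or_pos k with rfl | hk
      · rw [if_pos rfl, if_pos rfl, add_zero, add_zero, map_mul]
        ring
      · rw [if_neg (by omega), if_neg (by omega), map_add, map_mul, map_mul]
        ring
    have haveB : (∑ k ∈ Finset.range (n + 1 + 1),
          cc (n + 1) k e * toRat (qint (2 * k + 1)) * toRat (b n k))
        = ∑ k ∈ Finset.range (n + 1),
            cc (n + 1) k e * toRat (qint (2 * k + 1)) * toRat (b n k) := by
      rw [Finset.sum_range_succ, hb0 n (n + 1) (by omega), map_zero, mul_zero, add_zero]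
    have haveC : (∑ k ∈ Finset.range (n + 1 + 1), (if k = 0 then 0 else
            cc (n + 1) k e * toRat ((1 + Polynomial.X) * (1 + Polynomial.X ^ (2 * k - 1)) *
              Polynomial.X ^ (2 * k - 1) * qint2 (n + 2 - 2 * k)) * toRat (b n (k - 1))))
        = ∑ k ∈ Finset.range (n + 1),
            cc (n + 1) (k + 1) e * toRat ((1 + Polynomial.X) * (1 + Polynomial.X ^ (2 * k + 1)) *
              Polynomial.X ^ (2 * k + 1) * qint2 (n - 2 * k)) * toRat (b n k) := by
      rw [Finset.sum_range_succ']
      have hz0 : (if (0:ℕ) = 0 then (0:RatFunc ℚ) else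
          cc (n + 1) 0 e * toRat ((1 + Polynomial.X) * (1 + Polynomial.X ^ (2 * 0 - 1)) *
            Polynomial.X ^ (2 * 0 - 1) * qint2 (n + 2 - 2 * 0)) * toRat (b n (0 - 1))) = 0 :=
        if_pos rfl
      rw [hz0, add_zero]
      refine Finset.sum_congr rfl fun k _ => ?_
      rw [if_neg (Nat.succ_ne_zero k)]
      rw [show 2 * (k + 1) - 1 = 2 * k + 1 by omega, show n + 2 - 2 * (k + 1) = n - 2 * k by omega,
        Nat.add_sub_cancel]
    -- per-term recurrence
    have key : ∀ k ∈ Finset.range (n + 1),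
        (1 - RatFunc.X) * ((cc (n + 1) k e * toRat (qint (2 * k + 1))
            + cc (n + 1) (k + 1) e * toRat ((1 + Polynomial.X) * (1 + Polynomial.X ^ (2 * k + 1)) *
                Polynomial.X ^ (2 * k + 1) * qint2 (n - 2 * k))) * toRat (b n k))
        = ((1 + RatFunc.X ^ (2 * ((n + 1 : ℕ) : ℤ) + e)) * cc n k e
            - RatFunc.X * ((1 + RatFunc.X ^ e) * cc n k (e + 2))) * toRat (b n k) := by
      intro k hk
      rcases le_or_gt (2 * k + 1) (n + 1) with hc | hc
      · have hp : (1 - RatFunc.X) * (cc (n + 1) k e * toRat (qint (2 * k + 1))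
            + cc (n + 1) (k + 1) e * toRat ((1 + Polynomial.X) * (1 + Polynomial.X ^ (2 * k + 1)) *
                Polynomial.X ^ (2 * k + 1) * qint2 (n - 2 * k)))
            = (1 + RatFunc.X ^ (2 * ((n + 1 : ℕ) : ℤ) + e)) * cc n k e
              - RatFunc.X * ((1 + RatFunc.X ^ e) * cc n k (e + 2)) := perk (n + 1) k e hc
        rw [← mul_assoc, hp]
      · rw [hb0 n k (by omega)]
        simp
    calc (1 - RatFunc.X) * ∑ k ∈ Finset.range (n + 1 + 1), cc (n + 1) k e * toRat (b (n + 1) k)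
        = (1 - RatFunc.X) * ∑ k ∈ Finset.range (n + 1),
            ((cc (n + 1) k e * toRat (qint (2 * k + 1))
              + cc (n + 1) (k + 1) e * toRat ((1 + Polynomial.X) * (1 + Polynomial.X ^ (2 * k + 1)) *
                  Polynomial.X ^ (2 * k + 1) * qint2 (n - 2 * k))) * toRat (b n k)) := by
          rw [haveA, haveB, haveC, ← Finset.sum_add_distrib]
          congr 1
          exact Finset.sum_congr rfl fun k _ => by ring
      _ = ∑ k ∈ Finset.range (n + 1),
            ((1 + RatFunc.X ^ (2 * ((n + 1 : ℕ) : ℤ) + e)) * cc n k e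
              - RatFunc.X * ((1 + RatFunc.X ^ e) * cc n k (e + 2))) * toRat (b n k) := by
          rw [Finset.mul_sum]
          exact Finset.sum_congr rfl key
      _ = (1 + RatFunc.X ^ (2 * ((n + 1 : ℕ) : ℤ) + e)) *
            (∑ k ∈ Finset.range (n + 1), cc n k e * toRat (b n k))
          - RatFunc.X * ((1 + RatFunc.X ^ e) *
              ∑ k ∈ Finset.range (n + 1), cc n k (e + 2) * toRat (b n k)) := by
          rw [Finset.mul_sum, Finset.mul_sum, Finset.mul_sum, ← Finset.sum_sub_distrib]
          exact Finset.sum_congr rfl fun k _ => by ring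
  -- the main formula
  have hmain : ∀ (N : ℕ) (e : ℤ),
      Polynomial.eval₂ toRat (-(RatFunc.X ^ e)) (B N)
        = ∑ k ∈ Finset.range (N + 1), cc N k e * toRat (b N k) := by
    intro N
    induction N with
    | zero =>
      intro e
      rw [hB0, Polynomial.eval₂_one, Finset.sum_range_one, hb00, map_one, mul_one]
      simp [cc, PiP_zero]
    | succ n ih =>
      intro e
      refine mul_left_cancel₀ h1X ?_
      rw [eval_rec B hB n e, ih e, ih (e + 2), hGrec n e]
  -- conclusion
  intro n
  constructor
  · rw [hmain (2 * n + 1) (-(2 * (n : ℤ) + 1))]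
    refine Finset.sum_eq_zero fun k hk => ?_
    rcases le_or_gt k n with hkn | hkn
    · have hz : PiP k (2 * n + 1 - 2 * k) (-(2 * (n : ℤ) + 1)) = 0 :=
        PiP_eq_zero _ _ _ (n - k) (by omega) (by push_cast [Nat.sub_add_cancel]; omega)
      rw [cc, hz, mul_zero, zero_mul]
    · rw [hb0 (2 * n + 1) k (by omega), map_zero, mul_zero]
  · rw [hmain (2 * n) (-(2 * (n : ℤ) + 1))]
    rw [Finset.sum_eq_single n]
    · rw [cc, show 2 * n - 2 * n = 0 by omega, PiP_zero, mul_one,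
        show -(2 * (n : ℤ) + 1) * (n : ℤ) = -((n : ℤ) * (2 * (n : ℤ) + 1)) by ring]
    · intro k hk hkn
      rcases lt_or_gt_of_ne hkn with hlt | hgt
      · have hz : PiP k (2 * n - 2 * k) (-(2 * (n : ℤ) + 1)) = 0 :=
          PiP_eq_zero _ _ _ (n - k) (by omega) (by push_cast [Nat.sub_add_cancel]; omega)
        rw [cc, hz, mul_zero, zero_mul]
      · rw [hb0 (2 * n) k (by omega), map_zero, mul_zero]
    · intro hn
      exact absurd (Finset.mem_range.2 (by omega)) hn
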